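/- Let G be a graph on n vertices containing a set S of marked vertices such that (1) exactly one vertex ℓ ∈ S is designated a leader, (2) every marked vertex has exactly K−1 marked neighbors, one of which is ℓ (or is ℓ itself and has K−1 marked neighbors). Then S is a clique of size exactly K. -/

import Mathlib

/-- Soundness of the Clique protocol: if exactly one marked vertex `l` is the
leader, `l` has exactly `K−1` marked neighbors, and every other marked vertex has
exactly `K−1` marked neighbors one of which is `l`, then the marked set is a clique
of size exactly `K`. -/
theorem stmt_18 {V : Type*} [DecidableEq V] (G : SimpleGraph V) [DecidableRel G.Adj]
    (K : ℕ) (hK : 1 ≤ K) (S : Finset V) (l : V) (hl : l ∈ S)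
    (hleader : (S.filter (fun u => G.Adj l u)).card = K - 1)
    (hmarked : ∀ u ∈ S, u ≠ l →
      (S.filter (fun v => G.Adj u v)).card = K - 1 ∧ G.Adj l u) :
    S.card = K ∧ ∀ u ∈ S, ∀ v ∈ S, u ≠ v → G.Adj u v := by
  have hfl : S.filter (fun u => G.Adj l u) = S.erase l := by
    ext x
    simp only [Finset.mem_filter, Finset.mem_erase]
    constructor
    · rintro ⟨hx, hadj⟩
      exact ⟨fun h => G.loopless.irrefl l (h ▸ hadj), hx⟩
    · rintro ⟨hne, hx⟩
      exact ⟨hx, (hmarked x hx hne).2⟩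
  have hcard : S.card = K := by
    have h1 : (S.erase l).card = S.card - 1 := Finset.card_erase_of_mem hl
    have h2 : S.card - 1 = K - 1 := by rw [← h1, ← hfl, hleader]
    have hS1 : 1 ≤ S.card := Finset.card_pos.mpr ⟨l, hl⟩
    omega
  refine ⟨hcard, ?_⟩
  intro u hu v hv huv
  by_cases hul : u = l
  · subst hul
    exact (hmarked v hv (fun h => huv h.symm)).2
  · have hfu : S.filter (fun w => G.Adj u w) = S.erase u := by
      apply Finset.eq_of_subset_of_card_le
      · intro x hx
        simp only [Finset.mem_filter] at hx
        exact Finset.mem_erase.mpr ⟨fun h => G.loopless.irrefl u (h ▸ hx.2), hx.1⟩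
      · rw [Finset.card_erase_of_mem hu, (hmarked u hu hul).1, hcard]
    have : v ∈ S.filter (fun w => G.Adj u w) := by
      rw [hfu]; exact Finset.mem_erase.mpr ⟨fun h => huv h.symm, hv⟩
    exact (Finset.mem_filter.mp this).2
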